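/- Let C be a category with binary coproducts, T a monad on C such that Kl(T) has zero morphisms, and F̄ a lifting to Kl(T) of an endofunctor F on C. Then the functor F̄ + Id on Kl(T) carries a monad structure with unit the right coproduct injection inr : Id ⇒ F̄ + Id and multiplication [inl, id] ∘ (F̄([0, id]) + id) : (F̄+Id)² ⇒ F̄+Id; i.e., the unit and associativity laws of a monad hold for these data. -/

import Mathlib

open CategoryTheory CategoryTheory.Limits

universe v u

section PlusId

variable {K : Type u} [Category.{v} K] [HasBinaryCoproducts K] [HasZeroMorphisms K]

/-- The functor `F̄ + Id`. -/
@[simps]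
noncomputable def plusId (F : K ⥤ K) : K ⥤ K where
  obj X := F.obj X ⨿ X
  map f := coprod.map (F.map f) f

/-- The unit `inr : Id ⇒ F̄ + Id`. -/
noncomputable def unitP (F : K ⥤ K) (X : K) : X ⟶ (plusId F).obj X :=
  coprod.inr

/-- The multiplication `[inl, id] ∘ (F̄([0,id]) + id) : (F̄+Id)² ⇒ F̄+Id`. -/
noncomputable def multP (F : K ⥤ K) (X : K) : (plusId F).obj ((plusId F).obj X) ⟶ (plusId F).obj X :=
  coprod.map (F.map (coprod.desc 0 (𝟙 X))) (𝟙 ((plusId F).obj X)) ≫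
    coprod.desc coprod.inl (𝟙 ((plusId F).obj X))

end PlusId

/-- let `C` have binary coproducts, `T` a monad on `C` such that the Kleisli
category `Kl(T)` has zero morphisms (and inherits binary coproducts), and let `F̄` be a
lifting to `Kl(T)` of an endofunctor `F` on `C` (i.e. `(−)♯ ⋙ F̄ = F ⋙ (−)♯`).  Then
`F̄ + Id` carries a monad structure on `Kl(T)` with unit the coproduct injection `inr` and
multiplication `[inl, id] ∘ (F̄([0,id]) + id)`: both transformations are natural and the
monad unit and associativity laws hold. -/
theorem plusId_monad_laws
    {C : Type u} [Category.{v} C] [HasBinaryCoproducts C]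
    (T : Monad C)
    [HasBinaryCoproducts (Kleisli T)] [HasZeroMorphisms (Kleisli T)]
    (F : C ⥤ C) (Fbar : Kleisli T ⥤ Kleisli T)
    (hlift : Kleisli.Adjunction.toKleisli T ⋙ Fbar = F ⋙ Kleisli.Adjunction.toKleisli T) :
    (∀ {X Y : Kleisli T} (f : X ⟶ Y),
      unitP Fbar X ≫ (plusId Fbar).map f = f ≫ unitP Fbar Y) ∧
    (∀ {X Y : Kleisli T} (f : X ⟶ Y),
      multP Fbar X ≫ (plusId Fbar).map f =
        (plusId Fbar).map ((plusId Fbar).map f) ≫ multP Fbar Y) ∧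
    (∀ X : Kleisli T, unitP Fbar ((plusId Fbar).obj X) ≫ multP Fbar X = 𝟙 _) ∧
    (∀ X : Kleisli T, (plusId Fbar).map (unitP Fbar X) ≫ multP Fbar X = 𝟙 _) ∧
    (∀ X : Kleisli T,
      multP Fbar ((plusId Fbar).obj X) ≫ multP Fbar X =
        (plusId Fbar).map (multP Fbar X) ≫ multP Fbar X) := by
  refine ⟨fun f => by show coprod.inr ≫ coprod.map (Fbar.map f) f = f ≫ coprod.inr; simp [unitP, coprod.inl_desc, coprod.inr_desc, coprod.inl_desc_assoc, coprod.inr_desc_assoc, coprod.inl_map, coprod.inr_map, coprod.inl_map_assoc, coprod.inr_map_assoc, coprod.map_desc],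
    fun {X Y} f => ?_,
    fun X => by show (coprod.inr : (Fbar.obj X ⨿ X) ⟶ (Fbar.obj (Fbar.obj X ⨿ X) ⨿ (Fbar.obj X ⨿ X))) ≫ (coprod.map (Fbar.map (coprod.desc 0 (𝟙 X))) (𝟙 (Fbar.obj X ⨿ X)) ≫ coprod.desc coprod.inl (𝟙 (Fbar.obj X ⨿ X))) = 𝟙 (Fbar.obj X ⨿ X); apply coprod.hom_ext <;> simp [unitP, multP, coprod.inl_desc, coprod.inr_desc, coprod.inl_desc_assoc, coprod.inr_desc_assoc, coprod.inl_map, coprod.inr_map, coprod.inl_map_assoc, coprod.inr_map_assoc, coprod.map_desc],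
    fun X => ?_, fun X => ?_⟩
  · show (coprod.map (Fbar.map (coprod.desc 0 (𝟙 X))) (𝟙 (Fbar.obj X ⨿ X)) ≫ coprod.desc coprod.inl (𝟙 (Fbar.obj X ⨿ X))) ≫ coprod.map (Fbar.map f) f = coprod.map (Fbar.map (coprod.map (Fbar.map f) f)) (coprod.map (Fbar.map f) f) ≫ (coprod.map (Fbar.map (coprod.desc 0 (𝟙 Y))) (𝟙 (Fbar.obj Y ⨿ Y)) ≫ coprod.desc coprod.inl (𝟙 (Fbar.obj Y ⨿ Y)))
    apply coprod.hom_ext <;> simp [multP, coprod.inl_desc, coprod.inr_desc, coprod.inl_desc_assoc, coprod.inr_desc_assoc, coprod.inl_map, coprod.inr_map, coprod.inl_map_assoc, coprod.inr_map_assoc, coprod.map_desc]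
    simp only [← Category.assoc, ← Fbar.map_comp]
    congr 2
    apply coprod.hom_ext <;> simp [coprod.inl_desc, coprod.inr_desc, coprod.inl_desc_assoc, coprod.inr_desc_assoc, coprod.inl_map, coprod.inr_map, coprod.inl_map_assoc, coprod.inr_map_assoc, coprod.map_desc]
  · show coprod.map (Fbar.map (coprod.inr : X ⟶ (Fbar.obj X ⨿ X))) (coprod.inr : X ⟶ (Fbar.obj X ⨿ X)) ≫ (coprod.map (Fbar.map (coprod.desc 0 (𝟙 X))) (𝟙 (Fbar.obj X ⨿ X)) ≫ coprod.desc coprod.inl (𝟙 (Fbar.obj X ⨿ X))) = 𝟙 (Fbar.obj X ⨿ X)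
    apply coprod.hom_ext <;> simp [unitP, multP, coprod.inl_desc, coprod.inr_desc, coprod.inl_desc_assoc, coprod.inr_desc_assoc, coprod.inl_map, coprod.inr_map, coprod.inl_map_assoc, coprod.inr_map_assoc, coprod.map_desc]
    rw [← Category.assoc, ← Fbar.map_comp, coprod.inr_desc, Fbar.map_id, Category.id_comp]
  · show (coprod.map (Fbar.map (coprod.desc 0 (𝟙 (Fbar.obj X ⨿ X)))) (𝟙 (Fbar.obj (Fbar.obj X ⨿ X) ⨿ (Fbar.obj X ⨿ X))) ≫ coprod.desc coprod.inl (𝟙 (Fbar.obj (Fbar.obj X ⨿ X) ⨿ (Fbar.obj X ⨿ X)))) ≫ (coprod.map (Fbar.map (coprod.desc 0 (𝟙 X))) (𝟙 (Fbar.obj X ⨿ X)) ≫ coprod.desc coprod.inl (𝟙 (Fbar.obj X ⨿ X))) = coprod.map (Fbar.map (coprod.map (Fbar.map (coprod.desc 0 (𝟙 X))) (𝟙 (Fbar.obj X ⨿ X)) ≫ coprod.desc coprod.inl (𝟙 (Fbar.obj X ⨿ X)))) (coprod.map (Fbar.map (coprod.desc 0 (𝟙 X))) (𝟙 (Fbar.obj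 X ⨿ X)) ≫ coprod.desc coprod.inl (𝟙 (Fbar.obj X ⨿ X))) ≫ (coprod.map (Fbar.map (coprod.desc 0 (𝟙 X))) (𝟙 (Fbar.obj X ⨿ X)) ≫ coprod.desc coprod.inl (𝟙 (Fbar.obj X ⨿ X)))
    apply coprod.hom_ext <;> simp [multP, coprod.inl_desc, coprod.inr_desc, coprod.inl_desc_assoc, coprod.inr_desc_assoc, coprod.inl_map, coprod.inr_map, coprod.inl_map_assoc, coprod.inr_map_assoc, coprod.map_desc]
    simp only [← Category.assoc, ← Fbar.map_comp]
    congr 2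
    apply coprod.hom_ext <;> simp [coprod.inl_desc, coprod.inr_desc, coprod.inl_desc_assoc, coprod.inr_desc_assoc, coprod.inl_map, coprod.inr_map, coprod.inl_map_assoc, coprod.inr_map_assoc, coprod.map_desc]
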